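/- Let S = k[x_0,x_1,x_2] over an infinite field k, let Q be a nonzero quadratic form and F a cubic form with gcd(Q,F) = 1. Let I = (x_0Q, x_1Q, x_2Q, F) and J = (x_0Q, x_1Q, x_2Q). Then J : I^∞ = (Q). -/

import Mathlib

open MvPolynomial

theorem cubic_example_saturation {k : Type*} [Field k] [Infinite k]
    (Q F : MvPolynomial (Fin 3) k)
    (hQ : Q ≠ 0) (hQdeg : Q.IsHomogeneous 2) (hFdeg : F.IsHomogeneous 3)
    (hrp : IsRelPrime Q F) :
    letI x0 : MvPolynomial (Fin 3) k := X 0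
    letI x1 : MvPolynomial (Fin 3) k := X 1
    letI x2 : MvPolynomial (Fin 3) k := X 2
    letI I : Ideal (MvPolynomial (Fin 3) k) := Ideal.span {x0 * Q, x1 * Q, x2 * Q, F}
    letI J : Ideal (MvPolynomial (Fin 3) k) := Ideal.span {x0 * Q, x1 * Q, x2 * Q}
    (⨆ j : ℕ, J.colon ((I ^ (j + 1) : Ideal (MvPolynomial (Fin 3) k)) : Set (MvPolynomial (Fin 3) k))) = Ideal.span {Q} := by
  set I : Ideal (MvPolynomial (Fin 3) k) :=
    Ideal.span {X 0 * Q, X 1 * Q, X 2 * Q, F} with hI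
  set J : Ideal (MvPolynomial (Fin 3) k) :=
    Ideal.span {X 0 * Q, X 1 * Q, X 2 * Q} with hJ
  have hJle : J ≤ Ideal.span {Q} := by
    rw [hJ, Ideal.span_le]
    rintro f (rfl | rfl | rfl) <;>
      exact Ideal.mem_span_singleton.2 (Dvd.intro_left _ rfl)
  -- key fact: Q * F ∈ J since F lies in the irrelevant ideal
  have hFmem : F ∈ Ideal.span ({X 0, X 1, X 2} : Set (MvPolynomial (Fin 3) k)) := by
    have h1 : F ∈ Ideal.span (MvPolynomial.X '' (Set.univ : Set (Fin 3)) :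
        Set (MvPolynomial (Fin 3) k)) := by
      rw [mem_ideal_span_X_image]
      intro m hm
      have hdeg : (Finsupp.weight 1) m = 3 := hFdeg (mem_support_iff.mp hm)
      by_contra hc
      push_neg at hc
      have hm0 : m = 0 := by
        ext i
        exact hc i (Set.mem_univ i)
      rw [hm0, map_zero] at hdeg
      exact three_ne_zero hdeg.symm
    refine Ideal.span_mono ?_ h1
    rintro _ ⟨i, -, rfl⟩
    fin_cases i <;> simp
  have hQF : Q * F ∈ J := by
    refine Submodule.span_induction (p := fun f _ => Q * f ∈ J) ?_ ?_ ?_ ?_ hFmem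
    · rintro f (rfl | rfl | rfl)
      · exact Ideal.subset_span (by
          simp only [Set.mem_insert_iff, Set.mem_singleton_iff]
          exact Or.inl (mul_comm Q (X 0)))
      · exact Ideal.subset_span (by
          simp only [Set.mem_insert_iff, Set.mem_singleton_iff]
          exact Or.inr (Or.inl (mul_comm Q (X 1))))
      · exact Ideal.subset_span (by
          simp only [Set.mem_insert_iff, Set.mem_singleton_iff]
          exact Or.inr (Or.inr (mul_comm Q (X 2))))
    · simp
    · intro a b _ _ ha hb
      rw [mul_add]; exact Ideal.add_mem _ ha hb
    · intro a b _ hb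
      rw [smul_eq_mul, show Q * (a * b) = a * (Q * b) by ring]
      exact Ideal.mul_mem_left _ _ hb
  apply le_antisymm
  · apply iSup_le
    intro j g hg
    have hF : F ∈ I := Ideal.subset_span (by simp)
    have hFp : F ^ (j + 1) ∈ I ^ (j + 1) := Ideal.pow_mem_pow hF _
    have h2 := Submodule.mem_colon.mp hg _ hFp
    have hdvd : Q ∣ g * F ^ (j + 1) :=
      Ideal.mem_span_singleton.1 (hJle h2)
    exact Ideal.mem_span_singleton.2 ((hrp.pow_right).dvd_of_dvd_mul_right hdvd)
  · rw [Ideal.span_le, Set.singleton_subset_iff]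
    refine Submodule.mem_iSup_of_mem 0 ?_
    rw [Submodule.mem_colon]
    intro p hp
    rw [pow_one] at hp
    simp only [smul_eq_mul]
    rw [hI] at hp
    refine Submodule.span_induction (p := fun f _ => Q * f ∈ J) ?_ ?_ ?_ ?_ hp
    · rintro f (rfl | rfl | rfl | rfl)
      · exact Ideal.mul_mem_left _ _ (Ideal.subset_span (by simp))
      · exact Ideal.mul_mem_left _ _ (Ideal.subset_span (by simp))
      · exact Ideal.mul_mem_left _ _ (Ideal.subset_span (by simp))
      · exact hQF
    · simp
    · intro a b _ _ ha hb
      rw [mul_add]; exact Ideal.add_mem _ ha hb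
    · intro a b _ hb
      rw [smul_eq_mul, show Q * (a * b) = a * (Q * b) by ring]
      exact Ideal.mul_mem_left _ _ hb
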